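/- Let ε > 0 and let s : Δ_{L−1} → 𝒫([L]) be any selection rule that is ε-compatible, permutation invariant, and contains the argmax. Then for any w ∈ Δ_{L−1} and any j ∈ [L], if s(w) = {j} then argmax^ε(w) = {j}. -/

import Mathlib

noncomputable section

/-- The set `R_j^ε = {w ∈ ℝ^L : w_j ≥ max_{ℓ≠j} w_ℓ + ε/√2}`. -/
def Rset (L : ℕ) (ε : ℝ) (j : Fin L) : Set (EuclideanSpace ℝ (Fin L)) :=
  {w | ∀ ℓ : Fin L, ℓ ≠ j → w ℓ + ε / Real.sqrt 2 ≤ w j}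

/-- The inflated argmax: `argmax^ε(w) = {j ∈ [L] : dist(w, R_j^ε) < ε}`. -/
def inflatedArgmax (L : ℕ) (ε : ℝ) (w : EuclideanSpace ℝ (Fin L)) : Set (Fin L) :=
  {j | Metric.infDist w (Rset L ε j) < ε}

/-- The probability simplex `Δ_{L−1}`. -/
def simplex (L : ℕ) : Set (EuclideanSpace ℝ (Fin L)) :=
  {w | (∀ i, 0 ≤ w i) ∧ ∑ i, w i = 1}

/-- Optimality of the inflated argmax: any `ε`-compatible, permutation-invariant
selection rule containing the argmax returns a singleton `{j}` only when
`argmax^ε(w) = {j}`. -/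
theorem inflatedArgmax_optimal (L : ℕ) (hL : 2 ≤ L) (ε : ℝ) (hε : 0 < ε)
    (s : EuclideanSpace ℝ (Fin L) → Set (Fin L))
    (hcompat : ∀ v w : EuclideanSpace ℝ (Fin L), v ∈ simplex L → w ∈ simplex L →
      dist v w < ε → (s v ∩ s w).Nonempty)
    (hperm : ∀ w v : EuclideanSpace ℝ (Fin L), w ∈ simplex L →
      ∀ σ : Equiv.Perm (Fin L), (∀ i, v i = w (σ i)) →
        ∀ j : Fin L, j ∈ s v ↔ σ j ∈ s w)
    (hargmax : ∀ w ∈ simplex L, {j : Fin L | ∀ ℓ : Fin L, w ℓ ≤ w j} ⊆ s w)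
    (w : EuclideanSpace ℝ (Fin L)) (hw : w ∈ simplex L) (j : Fin L)
    (hs : s w = {j}) :
    inflatedArgmax L ε w = {j} := by
  have hs2pos : (0:ℝ) < Real.sqrt 2 := Real.sqrt_pos.mpr (by norm_num)
  have h2 : Real.sqrt 2 ^ 2 = 2 := Real.sq_sqrt (by norm_num)
  have hs1 : 1 < Real.sqrt 2 := by nlinarith
  have hc : 0 < ε / Real.sqrt 2 := div_pos hε hs2pos
  have hcε : ε / Real.sqrt 2 < ε := div_lt_self hε hs1
  have hce : (ε / Real.sqrt 2) * Real.sqrt 2 = ε := div_mul_cancel₀ ε (ne_of_gt hs2pos)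
  have hc2 : 2 * (ε / Real.sqrt 2) ^ 2 = ε ^ 2 := by nlinarith
  -- Step A: j maximizes w
  have hmax : ∀ ℓ, w ℓ ≤ w j := by
    have hne : (Finset.univ : Finset (Fin L)).Nonempty :=
      ⟨⟨0, by omega⟩, Finset.mem_univ _⟩
    obtain ⟨b, _, hb⟩ := Finset.exists_max_image Finset.univ w hne
    have hbmem : b ∈ s w := hargmax w hw (fun ℓ => hb ℓ (Finset.mem_univ ℓ))
    rw [hs] at hbmem
    have hbj : b = j := hbmem
    intro ℓ; rw [← hbj]; exact hb ℓ (Finset.mem_univ ℓ)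
  -- Step B: j ∈ inflatedArgmax
  have hjmem : j ∈ inflatedArgmax L ε w := by
    have hv : (WithLp.toLp 2 (fun i => if i = j then w j + ε / Real.sqrt 2 else w i) :
        EuclideanSpace ℝ (Fin L)) ∈ Rset L ε j := by
      intro ℓ hℓ
      simp only [Set.mem_setOf_eq] at *
      simp [hℓ]
      linarith [hmax ℓ]
    have hdist : dist w (WithLp.toLp 2 (fun i => if i = j then w j + ε / Real.sqrt 2 else w i) :
        EuclideanSpace ℝ (Fin L)) = ε / Real.sqrt 2 := by
      rw [EuclideanSpace.dist_eq]
      simp only [Real.dist_eq, sq_abs, PiLp.toLp_apply]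
      have hterm : ∀ i : Fin L,
          (w i - (if i = j then w j + ε / Real.sqrt 2 else w i)) ^ 2 =
            if i = j then (ε / Real.sqrt 2) ^ 2 else 0 := by
        intro i
        by_cases h : i = j
        · subst h; simp
        · simp [h]
      rw [Finset.sum_congr rfl (fun i _ => hterm i), Finset.sum_ite_eq' Finset.univ j]
      simp [Real.sqrt_sq hc.le]
    show Metric.infDist w (Rset L ε j) < ε
    calc Metric.infDist w (Rset L ε j) ≤ _ := Metric.infDist_le_dist_of_mem hv
      _ < ε := by rw [hdist]; exact hcε
  -- Step C
  have hnot : ∀ k : Fin L, k ≠ j → k ∉ inflatedArgmax L ε w := by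
    intro k hkj hk
    have hRne : (Rset L ε k).Nonempty := by
      refine ⟨(WithLp.toLp 2 (fun i => if i = k then ε / Real.sqrt 2 else 0) :
        EuclideanSpace ℝ (Fin L)), ?_⟩
      intro ℓ hℓ
      simp [if_neg hℓ]
    obtain ⟨u, huR, hud⟩ := (Metric.infDist_lt_iff hRne).mp hk
    -- swap argument: w j - w k ≥ ε/√2
    have hjk : w k + ε / Real.sqrt 2 ≤ w j := by
      set σ := Equiv.swap j k with hσ
      have hw' : (WithLp.toLp 2 (fun i => w (σ i)) : EuclideanSpace ℝ (Fin L)) ∈ simplex L := by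
        refine ⟨fun i => hw.1 (σ i), ?_⟩
        simp only [PiLp.toLp_apply]
        rw [Equiv.sum_comp σ w]
        exact hw.2
      have hpermv := hperm w (WithLp.toLp 2 (fun i => w (σ i)) : EuclideanSpace ℝ (Fin L)) hw σ
        (fun i => rfl)
      have hdisj : ¬ (s w ∩ s (WithLp.toLp 2 (fun i => w (σ i)) : EuclideanSpace ℝ (Fin L))).Nonempty := by
        rintro ⟨x, hx1, hx2⟩
        rw [hs] at hx1
        have hx1' : x = j := hx1
        have hσx := (hpermv x).mp hx2
        rw [hs] at hσx
        have h1 : σ x = j := hσx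
        rw [hx1', hσ, Equiv.swap_apply_left] at h1
        exact hkj h1
      have hd : ε ≤ dist w (WithLp.toLp 2 (fun i => w (σ i)) : EuclideanSpace ℝ (Fin L)) := by
        by_contra h
        exact hdisj (hcompat w _ hw hw' (lt_of_not_ge h))
      have hsum : (∑ i, (w i - w (σ i)) ^ 2) = 2 * (w j - w k) ^ 2 := by
        rw [← Finset.sum_subset (Finset.subset_univ ({j, k} : Finset (Fin L)))]
        · rw [Finset.sum_pair hkj.symm]
          rw [hσ, Equiv.swap_apply_left, Equiv.swap_apply_right]
          ring
        · intro i _ hi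
          simp only [Finset.mem_insert, Finset.mem_singleton, not_or] at hi
          rw [hσ, Equiv.swap_apply_of_ne_of_ne hi.1 hi.2]
          ring
      rw [EuclideanSpace.dist_eq] at hd
      simp only [Real.dist_eq, sq_abs, PiLp.toLp_apply] at hd
      have hnn : (0:ℝ) ≤ ∑ i, (w i - w (σ i)) ^ 2 := by positivity
      have hsq := Real.sq_sqrt hnn
      have hd2 : ε ^ 2 ≤ 2 * (w j - w k) ^ 2 := by nlinarith [Real.sqrt_nonneg (∑ i, (w i - w (σ i)) ^ 2)]
      nlinarith [hmax k]
    -- final contradiction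
    have hu : u j + ε / Real.sqrt 2 ≤ u k := huR j (Ne.symm hkj)
    have hsum2 : (w j - u j) ^ 2 + (w k - u k) ^ 2 ≤ dist w u ^ 2 := by
      rw [EuclideanSpace.dist_eq]
      simp only [Real.dist_eq, sq_abs]
      rw [Real.sq_sqrt (by positivity)]
      calc (w j - u j) ^ 2 + (w k - u k) ^ 2
          = ∑ i ∈ ({j, k} : Finset (Fin L)), (w i - u i) ^ 2 := by
            rw [Finset.sum_pair hkj.symm]
        _ ≤ ∑ i, (w i - u i) ^ 2 :=
            Finset.sum_le_sum_of_subset_of_nonneg (Finset.subset_univ _)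
              (fun i _ _ => sq_nonneg _)
    have hdnn : (0:ℝ) ≤ dist w u := dist_nonneg
    nlinarith [hud, hu, hjk, hc2, sq_nonneg ((w j - u j) + (w k - u k))]
  ext k
  simp only [Set.mem_singleton_iff]
  constructor
  · intro hk
    by_contra hkjne
    exact hnot k hkjne hk
  · rintro rfl; exact hjmem
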